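/- Fix j ∈ ℕ, design points x₁ < ⋯ < x_j, and let Λʲ = {z ∈ ℝʲ : 0 ≤ (z₂−z₁)/(x₂−x₁) ≤ ⋯ ≤ (z_j−z_{j−1})/(x_j−x_{j−1})} be the cone of increasing convex sequences. For k < j, let ẑ ∈ ℝᵏ be the projection of (Y₁,…,Y_k) onto the cone of increasing convex sequences based on x₁,…,x_k, extend it linearly to coordinates k+1,…,j with the last slope, obtaining v ∈ Λʲ, and set v(0) = (Y₁,…,Y_k, v_{k+1},…,v_j). Then the Euclidean projection of v(0) onto Λʲ equals v. -/

import Mathlib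

/-- Sequential update property for increasing convex regression: extending the
increasing convex LSE on the first `k` points linearly with its last slope
gives the projection of `v(0) = (Y₁,…,Y_k, v_{k+1},…,v_j)` onto the cone `Λʲ`
of increasing convex sequences based on `x₁,…,x_j`. -/
theorem stmt6 (j k : ℕ) (hk : 2 ≤ k) (hkj : k < j)
    (x Y : ℕ → ℝ) (hx : ∀ i, 1 ≤ i → x i < x (i + 1)) :
    let cone : ℕ → (ℕ → ℝ) → Prop := fun m z =>
      0 ≤ (z 2 - z 1) / (x 2 - x 1) ∧
      ∀ i, 2 ≤ i → i < m →
        (z i - z (i - 1)) / (x i - x (i - 1)) ≤ (z (i + 1) - z i) / (x (i + 1) - x i)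
    ∀ zh : ℕ → ℝ, cone k zh →
      (∀ z : ℕ → ℝ, cone k z →
        ∑ i ∈ Finset.Icc 1 k, (Y i - zh i) ^ 2 ≤ ∑ i ∈ Finset.Icc 1 k, (Y i - z i) ^ 2) →
      ∀ v : ℕ → ℝ,
        (∀ i, 1 ≤ i → i ≤ k → v i = zh i) →
        (∀ i, k ≤ i →
          v i = zh k + (zh k - zh (k - 1)) / (x k - x (k - 1)) * (x i - x k)) →
        let v0 : ℕ → ℝ := fun i => if i ≤ k then Y i else v i
        cone j v ∧ ∀ u : ℕ → ℝ, cone j u →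
          ∑ i ∈ Finset.Icc 1 j, (v0 i - v i) ^ 2 ≤ ∑ i ∈ Finset.Icc 1 j, (v0 i - u i) ^ 2 := by
  intro cone zh hzh hmin v hv1 hv2 v0
  obtain ⟨hzh1, hzh2⟩ := hzh
  set s : ℝ := (zh k - zh (k - 1)) / (x k - x (k - 1)) with hs
  have hxlt : ∀ i, 2 ≤ i → x (i - 1) < x i := by
    intro i hi
    have h := hx (i - 1) (by omega)
    have e : i - 1 + 1 = i := by omega
    rwa [e] at h
  -- the slope of v between i-1 and i equals s, for i ≥ k+1
  have hslope : ∀ i, k + 1 ≤ i → (v i - v (i - 1)) / (x i - x (i - 1)) = s := by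
    intro i hi
    have hvi := hv2 i (by omega)
    have hvi1 := hv2 (i - 1) (by omega)
    have hne : x i - x (i - 1) ≠ 0 := sub_ne_zero.2 (hxlt i (by omega)).ne'
    rw [hvi, hvi1]
    field_simp
    ring
  have hslopek : (v k - v (k - 1)) / (x k - x (k - 1)) = s := by
    rw [hv1 k (by omega) le_rfl, hv1 (k - 1) (by omega) (by omega)]
  -- cone j v
  have hconev : cone j v := by
    constructor
    · rw [hv1 2 (by omega) hk, hv1 1 (by omega) (by omega)]
      exact hzh1
    · intro i hi2 hij
      rcases lt_trichotomy i k with h | h | h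
      · rw [hv1 i (by omega) (by omega), hv1 (i - 1) (by omega) (by omega),
          hv1 (i + 1) (by omega) (by omega)]
        exact hzh2 i hi2 h
      · subst h
        have h1 : (v (i + 1) - v i) / (x (i + 1) - x i) = s := by
          have := hslope (i + 1) (by omega)
          simpa using this
        rw [hslopek, h1]
      · have h1 := hslope i (by omega)
        have h2 : (v (i + 1) - v i) / (x (i + 1) - x i) = s := by
          have := hslope (i + 1) (by omega)
          simpa using this
        rw [h1, h2]
  refine ⟨hconev, ?_⟩
  intro u ⟨hu1, hu2⟩
  have hconeu : cone k u := ⟨hu1, fun i hi hik => hu2 i hi (by omega)⟩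
  have hsplit : ∀ w : ℕ → ℝ,
      ∑ i ∈ Finset.Icc 1 j, (v0 i - w i) ^ 2 =
      ∑ i ∈ Finset.Icc 1 k, (v0 i - w i) ^ 2 + ∑ i ∈ Finset.Ioc k j, (v0 i - w i) ^ 2 := by
    intro w
    have e : ∀ m : ℕ, Finset.Icc 1 m = Finset.Ioc 0 m := by
      intro m; ext a; simp; omega
    rw [e, e, ← Finset.sum_Ioc_consecutive _ (Nat.zero_le k) (le_of_lt hkj)]
  have hv0k : ∀ i ∈ Finset.Icc 1 k, v0 i = Y i := by
    intro i hi
    simp only [Finset.mem_Icc] at hi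
    simp [v0, hi.2]
  have hLHS : ∑ i ∈ Finset.Icc 1 j, (v0 i - v i) ^ 2 =
      ∑ i ∈ Finset.Icc 1 k, (Y i - zh i) ^ 2 := by
    rw [hsplit]
    have h0 : ∑ i ∈ Finset.Ioc k j, (v0 i - v i) ^ 2 = 0 := by
      apply Finset.sum_eq_zero
      intro i hi
      simp only [Finset.mem_Ioc] at hi
      have : v0 i = v i := by simp [v0, Nat.not_le.2 hi.1]
      rw [this]; ring
    rw [h0, add_zero]
    apply Finset.sum_congr rfl
    intro i hi
    simp only [Finset.mem_Icc] at hi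
    rw [hv0k i (by simp [Finset.mem_Icc]; omega), hv1 i hi.1 hi.2]
  rw [hLHS, hsplit]
  have h1 : ∑ i ∈ Finset.Icc 1 k, (Y i - zh i) ^ 2 ≤
      ∑ i ∈ Finset.Icc 1 k, (v0 i - u i) ^ 2 := by
    calc ∑ i ∈ Finset.Icc 1 k, (Y i - zh i) ^ 2
        ≤ ∑ i ∈ Finset.Icc 1 k, (Y i - u i) ^ 2 := hmin u hconeu
      _ = ∑ i ∈ Finset.Icc 1 k, (v0 i - u i) ^ 2 := by
          apply Finset.sum_congr rfl
          intro i hi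
          rw [hv0k i hi]
  have h2 : 0 ≤ ∑ i ∈ Finset.Ioc k j, (v0 i - u i) ^ 2 :=
    Finset.sum_nonneg fun i _ => sq_nonneg _
  linarith
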